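/- Let β₀ > 1 and let λ ∈ ℂ with |β₀λ| > 1. Then there exist a constant C > 0 and a strictly increasing sequence (l(M))_{M≥1} of positive integers with d_{l(M)}(β₀,1) > 0 for every M ≥ 1, such that |Σ_{n=1}^∞ d_{n−1+l(M)}(β₀,1)/(β₀λ)^n| ≥ C for every M ≥ 1. -/

import Mathlib

open scoped BigOperators

/-- The beta-map `x ↦ βx - ⌊βx⌋`. -/
noncomputable def tau (β x : ℝ) : ℝ := β * x - ⌊β * x⌋

/-- Greedy digit `a_n(β,x) = ⌊β·τ_β^{n-1}(x)⌋` (meaningful for `n ≥ 1`). -/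
noncomputable def dig (β x : ℝ) (n : ℕ) : ℤ := ⌊β * (tau β)^[n - 1] x⌋

/-- `x` is a simple point for `β`: some `τ_β^{n-1}(x)` lies in `{1/β, …, ⌊β⌋/β}`. -/
def IsSimplePt (β x : ℝ) : Prop :=
  ∃ n : ℕ, 1 ≤ n ∧ ∃ k : ℕ, 1 ≤ k ∧ (k : ℤ) ≤ ⌊β⌋ ∧ (tau β)^[n - 1] x = (k : ℝ) / β

/-- `L(x)`: the least `n ≥ 1` with `τ_β^{n-1}(x) ∈ {1/β, …, ⌊β⌋/β}`. -/
noncomputable def Lpt (β x : ℝ) : ℕ :=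
  sInf {n : ℕ | 1 ≤ n ∧ ∃ k : ℕ, 1 ≤ k ∧ (k : ℤ) ≤ ⌊β⌋ ∧ (tau β)^[n - 1] x = (k : ℝ) / β}

/-- `β` is simple if `x = 1` is a simple point for `β`. -/
def IsSimpleBeta (β : ℝ) : Prop := IsSimplePt β 1

open Classical in
/-- Quasi-greedy digit `d_n(β,1)` (meaningful for `n ≥ 1`): if `β` is simple with `L = L(1)`,
the periodic sequence repeating the block `(a_1, …, a_{L-1}, a_L - 1)`; otherwise `a_n(β,1)`. -/
noncomputable def qdig (β : ℝ) (n : ℕ) : ℤ :=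
  if IsSimpleBeta β then
    (if (n - 1) % Lpt β 1 = Lpt β 1 - 1 then dig β 1 (Lpt β 1) - 1
     else dig β 1 ((n - 1) % Lpt β 1 + 1))
  else dig β 1 n

/-- `φ_β(z) = Σ_{n≥1} a_n(β,1) β^{-n} z^n`. -/
noncomputable def phi (β : ℝ) (z : ℂ) : ℂ :=
  ∑' n : ℕ, (dig β 1 (n + 1) : ℂ) * (z / (β : ℂ)) ^ (n + 1)

/-- `φ̂_β(z) = Σ_{n≥1} d_n(β,1) β^{-n} z^n`. -/
noncomputable def phiHat (β : ℝ) (z : ℂ) : ℂ :=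
  ∑' n : ℕ, (qdig β (n + 1) : ℂ) * (z / (β : ℂ)) ^ (n + 1)

/-- `ψ_β(z) = 1 + Σ_{n≥1} τ_β^n(1) β^{-n} z^n`. -/
noncomputable def psi (β : ℝ) (z : ℂ) : ℂ :=
  1 + ∑' n : ℕ, (((tau β)^[n + 1] 1 : ℝ) : ℂ) * (z / (β : ℂ)) ^ (n + 1)

/-- `F_λ(x) = Σ_{n≥1} a_n(β,x)/(βλ)^n`. -/
noncomputable def Ffun (β : ℝ) (lam : ℂ) (x : ℝ) : ℂ :=
  ∑' n : ℕ, (dig β x (n + 1) : ℂ) / ((β : ℂ) * lam) ^ (n + 1)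

lemma tau_eq_fract (β x : ℝ) : tau β x = Int.fract (β * x) := rfl

lemma iter_nonneg (β : ℝ) : ∀ n, 0 ≤ (tau β)^[n] 1
  | 0 => by norm_num
  | (n+1) => by
      rw [Function.iterate_succ_apply', tau_eq_fract]
      exact Int.fract_nonneg _

lemma iter_le_one (β : ℝ) : ∀ n, (tau β)^[n] 1 ≤ 1
  | 0 => le_refl _
  | (n+1) => by
      rw [Function.iterate_succ_apply', tau_eq_fract]
      exact (Int.fract_lt_one _).le

lemma iter_lt_one (β : ℝ) (n : ℕ) : (tau β)^[n+1] 1 < 1 := by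
  rw [Function.iterate_succ_apply', tau_eq_fract]; exact Int.fract_lt_one _

lemma dig_nonneg {β : ℝ} (hβ : 0 < β) (n : ℕ) : 0 ≤ dig β 1 n :=
  Int.floor_nonneg.2 (mul_nonneg hβ.le (iter_nonneg β _))

lemma dig_le {β : ℝ} (hβ : 0 < β) (n : ℕ) : dig β 1 n ≤ ⌊β⌋ := by
  have : β * (tau β)^[n-1] 1 ≤ β := by
    nlinarith [iter_le_one β (n-1), iter_nonneg β (n-1)]
  exact Int.floor_le_floor this

lemma Lpt_mem {β : ℝ} (h : IsSimpleBeta β) :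
    1 ≤ Lpt β 1 ∧ ∃ k : ℕ, 1 ≤ k ∧ (k : ℤ) ≤ ⌊β⌋ ∧ (tau β)^[Lpt β 1 - 1] 1 = (k : ℝ) / β :=
  Nat.sInf_mem (h : ∃ n, n ∈ {n : ℕ | 1 ≤ n ∧ ∃ k : ℕ, 1 ≤ k ∧ (k : ℤ) ≤ ⌊β⌋ ∧ (tau β)^[n - 1] 1 = (k : ℝ) / β})

lemma dig_Lpt {β : ℝ} (hβ : 1 < β) (h : IsSimpleBeta β) :
    ∃ k : ℕ, 1 ≤ k ∧ (k : ℤ) ≤ ⌊β⌋ ∧ dig β 1 (Lpt β 1) = (k : ℤ) := by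
  obtain ⟨-, k, hk1, hk2, hk3⟩ := Lpt_mem h
  refine ⟨k, hk1, hk2, ?_⟩
  have hβ0 : β ≠ 0 := by positivity
  rw [dig, hk3, mul_div_cancel₀ _ hβ0, Int.floor_natCast]

lemma qdig_nonneg {β : ℝ} (hβ : 1 < β) (n : ℕ) : 0 ≤ qdig β n := by
  have hβ0 : (0:ℝ) < β := by linarith
  rw [qdig]
  split_ifs with h1 h2
  · obtain ⟨k, hk1, -, hk3⟩ := dig_Lpt hβ h1
    rw [hk3]; omega
  · exact dig_nonneg hβ0 _
  · exact dig_nonneg hβ0 _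

lemma qdig_le {β : ℝ} (hβ : 1 < β) (n : ℕ) : qdig β n ≤ ⌊β⌋ := by
  have hβ0 : (0:ℝ) < β := by linarith
  rw [qdig]
  split_ifs with h1 h2
  · have := dig_le hβ0 (Lpt β 1); omega
  · exact dig_le hβ0 _
  · exact dig_le hβ0 _

lemma exists_pos_dig {β : ℝ} (hβ : 1 < β) (hns : ¬ IsSimpleBeta β) (N : ℕ) :
    ∃ n, N ≤ n ∧ 1 ≤ n ∧ 0 < dig β 1 n := by
  by_contra hc
  push_neg at hc
  have hβ0 : (0:ℝ) < β := by linarith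
  set N' := max N 1 with hN'
  have hN'1 : 1 ≤ N' := le_max_right _ _
  have hz : ∀ m, N' ≤ m → dig β 1 m = 0 := fun m hm =>
    le_antisymm (hc m (le_trans (le_max_left _ _) hm) (le_trans hN'1 hm)) (dig_nonneg hβ0 m)
  have step : ∀ m, N' ≤ m → (tau β)^[m] 1 = β * (tau β)^[m-1] 1 := by
    intro m hm
    have hm1 : 1 ≤ m := le_trans hN'1 hm
    have : m = (m-1) + 1 := by omega
    rw [this, Function.iterate_succ_apply']
    have h0 : ⌊β * (tau β)^[m-1] 1⌋ = dig β 1 m := rfl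
    rw [tau, h0, hz m hm]
    push_cast; ring
  have claim : ∀ k, (tau β)^[N'-1+k] 1 = β^k * (tau β)^[N'-1] 1 := by
    intro k
    induction k with
    | zero => simp
    | succ k ih =>
        have h1 : N'-1+(k+1) = (N'+k) := by omega
        have h2 : N'+k-1 = N'-1+k := by omega
        rw [h1, step (N'+k) (by omega), h2, ih, pow_succ]; ring
  have ht : (tau β)^[N'-1] 1 = 0 := by
    by_contra ht0
    have htpos : 0 < (tau β)^[N'-1] 1 := lt_of_le_of_ne (iter_nonneg β _) (Ne.symm ht0)
    obtain ⟨k, hk⟩ := pow_unbounded_of_one_lt (1 / (tau β)^[N'-1] 1) hβ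
    have h1 : 1 < β^k * (tau β)^[N'-1] 1 := (div_lt_iff₀ htpos).mp hk
    have h2 := iter_le_one β (N'-1+k)
    rw [claim k] at h2
    linarith
  have hex : ∃ m, (tau β)^[m] 1 = 0 := by
    rcases Nat.lt_or_ge N' 2 with h | h
    · have : N' = 1 := by omega
      rw [this] at ht; simp at ht
    · exact ⟨N'-1, ht⟩
  set m := Nat.find hex with hmdef
  have hm : (tau β)^[m] 1 = 0 := Nat.find_spec hex
  have hm1 : 1 ≤ m := by
    rcases Nat.eq_zero_or_pos m with h | h
    · rw [h] at hm; simp at hm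
    · exact h
  have hs0 : (tau β)^[m-1] 1 ≠ 0 := Nat.find_min hex (by omega)
  set s := (tau β)^[m-1] 1 with hsdef
  have hspos : 0 < s := lt_of_le_of_ne (iter_nonneg β _) (Ne.symm hs0)
  have hsle : s ≤ 1 := iter_le_one β _
  have hms : (tau β)^[m] 1 = tau β s := by
    have : m = (m-1)+1 := by omega
    rw [this, Function.iterate_succ_apply']
  have hfl : (⌊β * s⌋ : ℝ) = β * s := by
    rw [hms, tau] at hm; linarith
  set j := ⌊β * s⌋ with hjdef
  have hj1 : 1 ≤ j := by
    have h : (0:ℝ) < (j:ℝ) := by rw [hfl]; positivity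
    have : (0:ℤ) < j := by exact_mod_cast h
    omega
  have hjle : j ≤ ⌊β⌋ := Int.floor_le_floor (by nlinarith)
  apply hns
  refine ⟨m, hm1, j.toNat, ?_, ?_, ?_⟩
  · omega
  · rw [Int.toNat_of_nonneg (by omega)]; exact hjle
  · rw [← hsdef]
    have : ((j.toNat : ℕ) : ℝ) = (j : ℝ) := by
      rw [← Int.cast_natCast, Int.toNat_of_nonneg (by omega)]
    rw [this]
    rw [eq_div_iff (by positivity : β ≠ 0), mul_comm, ← hfl]

lemma dig_one {β : ℝ} : dig β 1 1 = ⌊β⌋ := by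
  simp [dig]

lemma exists_pos_qdig {β : ℝ} (hβ : 1 < β) (N : ℕ) :
    ∃ n, N ≤ n ∧ 1 ≤ n ∧ 0 < qdig β n := by
  by_cases hs : IsSimpleBeta β
  · obtain ⟨hL1, k, hk1, hk2, hk3⟩ := Lpt_mem hs
    by_cases hL : Lpt β 1 = 1
    · rw [hL] at hk3
      simp only [Nat.sub_self, Function.iterate_zero, id] at hk3
      have hβ0 : β ≠ 0 := by positivity
      have hβk : β = (k : ℝ) := by
        field_simp at hk3; linarith
      have hk2' : 2 ≤ (k : ℤ) := by
        have : (1:ℝ) < (k:ℝ) := by rw [← hβk]; exact hβ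
        exact_mod_cast this
      refine ⟨max N 1, le_max_left _ _, le_max_right _ _, ?_⟩
      rw [qdig, if_pos hs, if_pos (by rw [hL]; omega)]
      have hd : dig β 1 (Lpt β 1) = (k : ℤ) := by
        rw [hL, dig_one, hβk, Int.floor_natCast]
      rw [hd]; omega
    · have hL2 : 2 ≤ Lpt β 1 := by omega
      refine ⟨Lpt β 1 * N + 1, by nlinarith, by omega, ?_⟩
      have hmod : (Lpt β 1 * N + 1 - 1) % Lpt β 1 = 0 := by
        simp [Nat.mul_mod_right]
      rw [qdig, if_pos hs, if_neg (by omega), hmod, zero_add, dig_one]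
      have : (1:ℤ) ≤ ⌊β⌋ := by
        rw [Int.le_floor]; exact_mod_cast hβ.le
      omega
  · obtain ⟨n, hn1, hn2, hn3⟩ := exists_pos_dig hβ hs N
    exact ⟨n, hn1, hn2, by rwa [qdig, if_neg hs]⟩

noncomputable def Gfun (β : ℝ) (lam : ℂ) (l : ℕ) : ℂ :=
  ∑' n : ℕ, (qdig β (n + l) : ℂ) / ((β : ℂ) * lam) ^ (n + 1)

lemma qdig_abs_le {β : ℝ} (hβ : 1 < β) (n : ℕ) :
    ‖((qdig β n : ℂ))‖ ≤ (⌊β⌋ : ℝ) := by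
  rw [Complex.norm_intCast, abs_of_nonneg (by exact_mod_cast qdig_nonneg hβ n)]
  exact_mod_cast qdig_le hβ n

lemma Gsum {β : ℝ} (hβ : 1 < β) {lam : ℂ} (hlam : 1 < ‖((β : ℂ) * lam)‖) (l : ℕ) :
    Summable (fun n : ℕ => (qdig β (n + l) : ℂ) / ((β : ℂ) * lam) ^ (n + 1)) := by
  set w := (β : ℂ) * lam
  set W := ‖w‖ with hW
  have hW0 : 0 < W := by linarith
  apply Summable.of_norm
  have hmaj : Summable (fun n : ℕ => (⌊β⌋ : ℝ) * (W⁻¹ ^ (n + 1))) := by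
    apply Summable.mul_left
    have h := summable_geometric_of_lt_one (by positivity : (0:ℝ) ≤ W⁻¹)
      (inv_lt_one_of_one_lt₀ hlam)
    simpa [pow_succ] using h.mul_right W⁻¹
  apply Summable.of_nonneg_of_le (fun n => norm_nonneg _) _ hmaj
  intro n
  rw [norm_div, norm_pow, ← hW]
  rw [div_eq_mul_inv, ← inv_pow]
  exact mul_le_mul_of_nonneg_right (qdig_abs_le hβ _) (by positivity)

lemma Grec {β : ℝ} (hβ : 1 < β) {lam : ℂ} (hlam : 1 < ‖((β : ℂ) * lam)‖) (l : ℕ) :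
    Gfun β lam l = (qdig β l : ℂ) / ((β : ℂ) * lam) +
      Gfun β lam (l + 1) / ((β : ℂ) * lam) := by
  set w := (β : ℂ) * lam with hw
  rw [Gfun, Summable.tsum_eq_zero_add (Gsum hβ hlam l)]
  congr 1
  · norm_num [hw]
  · have he : ∀ n : ℕ, (qdig β (n + 1 + l) : ℂ) / w ^ (n + 1 + 1)
        = ((qdig β (n + (l + 1)) : ℂ) / w ^ (n + 1)) * w⁻¹ := by
      intro n
      rw [show n + 1 + l = n + (l + 1) from by ring, pow_succ]
      rw [div_mul_eq_div_div_swap, div_eq_mul_inv _ w, mul_comm _ w⁻¹,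
        mul_div_assoc, mul_comm]
    rw [tsum_congr he, tsum_mul_right, Gfun, div_eq_mul_inv]

lemma Gkey {β : ℝ} (hβ : 1 < β) {lam : ℂ} (hlam : 1 < ‖((β : ℂ) * lam)‖) (N : ℕ) :
    ∃ l : ℕ, N ≤ l ∧ 1 ≤ l ∧ 0 < qdig β l ∧
      1 / (2 * (‖((β : ℂ) * lam)‖ + 1)) ≤ ‖(Gfun β lam l)‖ := by
  set w := (β : ℂ) * lam with hw
  set W := ‖w‖ with hWdef
  set C : ℝ := 1 / (2 * (W + 1)) with hCdef
  by_contra hc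
  push_neg at hc
  have hW0 : (0:ℝ) < W := by linarith
  set N' := max N 1 with hN'
  have hc' : ∀ l, N' ≤ l → 0 < qdig β l → ‖(Gfun β lam l)‖ < C := by
    intro l hl hq
    exact hc l (le_trans (le_max_left _ _) hl) (le_trans (le_max_right _ _) hl) hq
  have claim : ∀ j l, N' ≤ l → 0 < qdig β (l + j) → ‖(Gfun β lam l)‖ < C := by
    intro j
    induction j with
    | zero => intro l hl hq; exact hc' l hl hq
    | succ j ih =>
        intro l hl hq
        by_cases hql : 0 < qdig β l
        · exact hc' l hl hql
        · have hq0 : qdig β l = 0 := le_antisymm (not_lt.mp hql) (qdig_nonneg hβ l)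
          have ih' : ‖(Gfun β lam (l + 1))‖ < C :=
            ih (l + 1) (by omega) (by rwa [show l + 1 + j = l + (j + 1) from by omega])
          have : Gfun β lam l = Gfun β lam (l + 1) / w := by
            rw [Grec hβ hlam l, hq0]; push_cast; rw [zero_div, zero_add]
          rw [this, norm_div, ← hWdef]
          calc ‖(Gfun β lam (l + 1))‖ / W ≤ ‖(Gfun β lam (l + 1))‖ :=
                div_le_self (by positivity) (by linarith)
            _ < C := ih'
  have main : ∀ l, N' ≤ l → ‖(Gfun β lam l)‖ < C := by
    intro l hl
    obtain ⟨n, hn1, -, hn3⟩ := exists_pos_qdig hβ l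
    exact claim (n - l) l hl (by rwa [show l + (n - l) = n from by omega])
  obtain ⟨l₁, h1, h2, h3⟩ := exists_pos_qdig hβ N'
  have e1 : ‖(Gfun β lam l₁)‖ < C := main l₁ h1
  have e2 : ‖(Gfun β lam (l₁ + 1))‖ < C := main _ (by omega)
  have hw0 : w ≠ 0 := by
    intro h
    rw [hWdef, h, norm_zero] at hW0
    exact lt_irrefl _ hW0
  have hqe : (qdig β l₁ : ℂ) = w * Gfun β lam l₁ - Gfun β lam (l₁ + 1) := by
    rw [Grec hβ hlam l₁, ← hw]
    field_simp
    ring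
  have h4 : (1:ℝ) ≤ ‖((qdig β l₁ : ℂ))‖ := by
    rw [Complex.norm_intCast]
    have : (1:ℤ) ≤ qdig β l₁ := h3
    calc (1:ℝ) ≤ (qdig β l₁ : ℝ) := by exact_mod_cast this
      _ ≤ |(qdig β l₁ : ℝ)| := le_abs_self _
  have h6 : ‖(w * Gfun β lam l₁ - Gfun β lam (l₁ + 1))‖ ≤
      W * ‖(Gfun β lam l₁)‖ + ‖(Gfun β lam (l₁ + 1))‖ := by
    calc ‖(w * Gfun β lam l₁ - Gfun β lam (l₁ + 1))‖
        ≤ ‖(w * Gfun β lam l₁)‖ + ‖(Gfun β lam (l₁ + 1))‖ := by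
          have := norm_sub_le (w * Gfun β lam l₁) (Gfun β lam (l₁ + 1))
          simpa using this
      _ = W * ‖(Gfun β lam l₁)‖ + ‖(Gfun β lam (l₁ + 1))‖ := by
          rw [norm_mul, ← hWdef]
  have hCval : (W + 1) * C = 1 / 2 := by
    rw [hCdef]; field_simp
  have hWmul : W * ‖(Gfun β lam l₁)‖ < W * C :=
    mul_lt_mul_of_pos_left e1 hW0
  rw [hqe] at h4
  nlinarith [h4, h6, hWmul, e2, hCval]

theorem stmt12 (β₀ : ℝ) (hβ₀ : 1 < β₀) (lam : ℂ)
    (hlam : 1 < ‖((β₀ : ℂ) * lam)‖) :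
    ∃ C > (0 : ℝ), ∃ l : ℕ → ℕ, StrictMono l ∧ (∀ M : ℕ, 1 ≤ l M) ∧
      (∀ M : ℕ, 0 < qdig β₀ (l M)) ∧
      ∀ M : ℕ, C ≤ ‖
        (∑' n : ℕ, (qdig β₀ (n + l M) : ℂ) / ((β₀ : ℂ) * lam) ^ (n + 1))‖ := by
  set W := ‖((β₀ : ℂ) * lam)‖ with hWdef
  have hW0 : (0:ℝ) < W := by linarith
  refine ⟨1 / (2 * (W + 1)), by positivity, ?_⟩
  have key := fun N => Gkey hβ₀ hlam N
  let f : ℕ → ℕ := fun M =>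
    Nat.rec (Classical.choose (key 1)) (fun _ p => Classical.choose (key (p + 1))) M
  have hf0 : f 0 = Classical.choose (key 1) := rfl
  have hfs : ∀ M, f (M + 1) = Classical.choose (key (f M + 1)) := fun M => rfl
  have hspec : ∀ M, 1 ≤ f M ∧ 0 < qdig β₀ (f M) ∧
      1 / (2 * (W + 1)) ≤ ‖(Gfun β₀ lam (f M))‖ := by
    intro M
    cases M with
    | zero =>
        obtain ⟨-, h2, h3, h4⟩ := Classical.choose_spec (key 1)
        exact ⟨h2, h3, h4⟩
    | succ M =>
        obtain ⟨-, h2, h3, h4⟩ := Classical.choose_spec (key (f M + 1))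
        exact ⟨h2, h3, h4⟩
  have hmono : StrictMono f := by
    apply strictMono_nat_of_lt_succ
    intro M
    obtain ⟨h1, -, -, -⟩ := Classical.choose_spec (key (f M + 1))
    rw [hfs M]
    omega
  refine ⟨f, hmono, fun M => (hspec M).1, fun M => (hspec M).2.1, fun M => ?_⟩
  exact (hspec M).2.2
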